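/- Let d ≥ 1 be an integer, δ > 0, and let ψ : [0,∞) → [0,∞) be a nonincreasing function with ∑_{m=1}^∞ m^{d−1} ψ(mδ) < ∞. Let k : ℝ^d × ℝ^d → ℝ be a symmetric function satisfying |k(x,x')| ≤ ψ(‖x − x'‖) for all x, x' ∈ ℝ^d. Then for every N and every δ-separated family x₁,…,x_N in ℝ^d, every eigenvalue of the symmetric N×N matrix K with entries K_{ij} = k(x_i, x_j) is at most ψ(0) + 10^d ∑_{m=1}^∞ m^{d−1} ψ(mδ). In particular, the largest eigenvalue of K is bounded by a constant depending only on k, δ and d, independently of N. -/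

import Mathlib

open MeasureTheory Metric Finset ENNReal


lemma pack_lemma (d : ℕ) (δ : ℝ) (hδ : 0 < δ) (c : EuclideanSpace ℝ (Fin d))
    (r R : ℝ) (hr : δ/2 ≤ r) (hrR : r ≤ R) {ι : Type*} (s : Finset ι)
    (y : ι → EuclideanSpace ℝ (Fin d))
    (hsep : ∀ i ∈ s, ∀ j ∈ s, i ≠ j → δ ≤ dist (y i) (y j))
    (hmem : ∀ i ∈ s, dist (y i) c ∈ Set.Icc r R) :
    (s.card : ℝ) * (δ/2)^d ≤ (R + δ/2)^d - (r - δ/2)^d := by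
  rcases Nat.eq_zero_or_pos d with hd0 | hd0
  · subst hd0
    -- d = 0 : space is trivial, dist = 0, so r ≤ 0 < δ/2 ≤ r contradiction unless s empty
    rcases s.eq_empty_or_nonempty with h | ⟨i, hi⟩
    · simp [h]
    · have := (hmem i hi).1
      have : dist (y i) c = 0 := Subsingleton.elim (y i) c ▸ dist_self c
      nlinarith [(hmem i hi).1]
  have hδ2 : (0:ℝ) < δ/2 := by linarith
  set μ := (volume : Measure (EuclideanSpace ℝ (Fin d)))
  haveI : Nonempty (Fin d) := ⟨⟨0, hd0⟩⟩
  haveI : Nontrivial (EuclideanSpace ℝ (Fin d)) := by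
    refine nontrivial_of_ne (EuclideanSpace.single (⟨0, hd0⟩ : Fin d) (1:ℝ)) 0 ?_
    intro he
    have h := congrArg norm he
    rw [norm_zero] at h
    simp [EuclideanSpace.norm_single] at h
  set c₀ := μ (ball (0 : EuclideanSpace ℝ (Fin d)) 1) with hc₀
  have hc₀pos : c₀ ≠ 0 := (measure_ball_pos μ 0 one_pos).ne'
  have hc₀top : c₀ ≠ ⊤ := measure_ball_lt_top.ne
  have hfr : Module.finrank ℝ (EuclideanSpace ℝ (Fin d)) = d := finrank_euclideanSpace_fin
  -- balls are disjoint and contained in the annulus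
  set A : Set (EuclideanSpace ℝ (Fin d)) := closedBall c (R + δ/2) \ ball c (r - δ/2) with hA
  have hsub : ∀ i ∈ s, ball (y i) (δ/2) ⊆ A := by
    intro i hi z hz
    rw [mem_ball] at hz
    obtain ⟨h1, h2⟩ := hmem i hi
    constructor
    · rw [mem_closedBall]
      have := dist_triangle z (y i) c
      linarith
    · rw [mem_ball, not_lt]
      have := dist_triangle (y i) z c
      have : dist (y i) c - dist z (y i) ≤ dist z c := by
        have := dist_triangle (y i) z c
        rw [dist_comm (y i) z] at this
        linarith
      linarith
  have hdisj : (↑s : Set ι).PairwiseDisjoint (fun i => ball (y i) (δ/2)) := by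
    intro i hi j hj hij
    apply Set.disjoint_left.2
    intro z hzi hzj
    rw [mem_ball] at hzi hzj
    have := hsep i hi j hj hij
    have := dist_triangle (y i) z (y j)
    rw [dist_comm (y i) z] at this
    linarith
  have hmeas : μ (⋃ i ∈ s, ball (y i) (δ/2)) = ∑ i ∈ s, μ (ball (y i) (δ/2)) :=
    measure_biUnion_finset hdisj (fun i _ => measurableSet_ball)
  have hball : ∀ i, μ (ball (y i) (δ/2)) = ENNReal.ofReal ((δ/2)^d) * c₀ := by
    intro i
    rw [Measure.addHaar_ball μ (y i) hδ2.le, hfr]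
  have hsum : ∑ i ∈ s, μ (ball (y i) (δ/2)) = (s.card : ℝ≥0∞) * (ENNReal.ofReal ((δ/2)^d) * c₀) := by
    rw [Finset.sum_congr rfl (fun i _ => hball i), Finset.sum_const, nsmul_eq_mul]
  have hAm : μ A ≤ ENNReal.ofReal ((R + δ/2)^d - (r - δ/2)^d) * c₀ := by
    have h1 : μ (closedBall c (R + δ/2)) = ENNReal.ofReal ((R + δ/2)^d) * c₀ := by
      rw [Measure.addHaar_closedBall μ c (by linarith), hfr]
    have h2 : μ (ball c (r - δ/2)) = ENNReal.ofReal ((r - δ/2)^d) * c₀ := by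
      rw [Measure.addHaar_ball μ c (by linarith), hfr]
    have hsub2 : ball c (r - δ/2) ⊆ closedBall c (R + δ/2) :=
      (ball_subset_closedBall).trans (closedBall_subset_closedBall (by linarith))
    rw [hA, measure_diff hsub2 measurableSet_ball.nullMeasurableSet measure_ball_lt_top.ne,
      h1, h2, ← ENNReal.sub_mul (fun _ _ => hc₀top), ← ENNReal.ofReal_sub _ (pow_nonneg (by linarith) d)]
  have key : (s.card : ℝ≥0∞) * ENNReal.ofReal ((δ/2)^d) ≤ ENNReal.ofReal ((R + δ/2)^d - (r - δ/2)^d) := by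
    rw [← ENNReal.mul_le_mul_iff_left hc₀pos hc₀top, mul_assoc]
    calc (s.card : ℝ≥0∞) * (ENNReal.ofReal ((δ/2)^d) * c₀)
        = μ (⋃ i ∈ s, ball (y i) (δ/2)) := by rw [hmeas, hsum]
      _ ≤ μ A := measure_mono (Set.iUnion₂_subset hsub)
      _ ≤ _ := hAm
  have := ENNReal.toReal_mono (by finiteness) key
  rw [ENNReal.toReal_mul, ENNReal.toReal_ofReal (by positivity),
    ENNReal.toReal_ofReal (by nlinarith [pow_le_pow_left₀ (by linarith : (0:ℝ) ≤ r - δ/2) (by linarith : r - δ/2 ≤ R + δ/2) d])] at this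
  simpa using this


lemma pow_diff_le' (d : ℕ) (a b : ℝ) (hb : 0 ≤ b) (hba : b ≤ a) :
    a^d - b^d ≤ d * (a - b) * a^(d-1) := by
  rw [← geom_sum₂_mul a b d]
  have ha : 0 ≤ a := hb.trans hba
  have hs : (∑ i ∈ Finset.range d, a^i * b^(d-1-i)) ≤ d * a^(d-1) := by
    calc ∑ i ∈ Finset.range d, a^i * b^(d-1-i)
        ≤ ∑ _i ∈ Finset.range d, a^(d-1) := by
          refine Finset.sum_le_sum fun i hi => ?_
          have h1 : a^i * b^(d-1-i) ≤ a^i * a^(d-1-i) :=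
            mul_le_mul_of_nonneg_left (pow_le_pow_left₀ hb hba _) (pow_nonneg ha _)
          have h2 : a^i * a^(d-1-i) = a^(d-1) := by
            rw [← pow_add]
            congr 1
            have := Finset.mem_range.1 hi
            omega
          linarith
      _ = d * a^(d-1) := by simp [mul_comm]
  have hab : 0 ≤ a - b := by linarith
  calc (∑ i ∈ Finset.range d, a^i * b^(d-1-i)) * (a - b)
      ≤ (d * a^(d-1)) * (a - b) := mul_le_mul_of_nonneg_right hs hab
    _ = d * (a - b) * a^(d-1) := by ring

lemma count_factor (d m : ℕ) (hd : 1 ≤ d) (hm : 1 ≤ m) :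
    (2*(m:ℝ)+3)^d - (2*(m:ℝ)-1)^d ≤ 10^d * (m:ℝ)^(d-1) := by
  have hm1 : (1:ℝ) ≤ (m:ℝ) := by exact_mod_cast hm
  have h1 := pow_diff_le' d (2*(m:ℝ)+3) (2*(m:ℝ)-1) (by linarith) (by linarith)
  have h2 : (2*(m:ℝ)+3)^(d-1) ≤ (5*(m:ℝ))^(d-1) :=
    pow_le_pow_left₀ (by linarith) (by linarith) _
  have h3 : (d:ℝ) * (2*(m:ℝ)+3 - (2*(m:ℝ)-1)) * (2*(m:ℝ)+3)^(d-1)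
      ≤ 4 * d * (5^(d-1) * (m:ℝ)^(d-1)) := by
    have : (2*(m:ℝ)+3 - (2*(m:ℝ)-1)) = 4 := by ring
    rw [this, mul_pow] at *
    have hd0 : (0:ℝ) ≤ d := Nat.cast_nonneg d
    nlinarith [pow_nonneg (by linarith : (0:ℝ) ≤ 2*(m:ℝ)+3) (d-1), h2,
      pow_nonneg (by norm_num : (0:ℝ) ≤ 5) (d-1), pow_nonneg (by linarith : (0:ℝ) ≤ (m:ℝ)) (d-1)]
  have h4 : 4 * (d:ℝ) * 5^(d-1) ≤ 10^d := by
    have hd2 : (d:ℝ) ≤ 2^d := by exact_mod_cast (Nat.lt_two_pow_self (n := d)).le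
    have h10 : (10:ℝ)^d = 2^d * (5 * 5^(d-1)) := by
      rw [← pow_succ']
      have : d - 1 + 1 = d := by omega
      rw [this, ← mul_pow]
      norm_num
    rw [h10]
    have h5p : (0:ℝ) ≤ 5^(d-1) := by positivity
    nlinarith [pow_pos (by norm_num : (0:ℝ) < 2) d]
  have h5 : (0:ℝ) ≤ (m:ℝ)^(d-1) := by positivity
  nlinarith

lemma eig_le_rowsum {N : ℕ} (K : Matrix (Fin N) (Fin N) ℝ) (hK : K.IsHermitian) (B : ℝ)
    (hB : ∀ i, ∑ j, |K i j| ≤ B) : ∀ i, hK.eigenvalues i ≤ B := by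
  intro i
  have hv := hK.mulVec_eigenvectorBasis i
  set v : Fin N → ℝ := (WithLp.equiv 2 (Fin N → ℝ)) (hK.eigenvectorBasis i) with hvdef
  have hvne : v ≠ 0 := by
    intro h
    have : hK.eigenvectorBasis i = 0 := by
      apply (WithLp.equiv 2 (Fin N → ℝ)).injective
      rw [hvdef] at h
      simpa using h
    exact hK.eigenvectorBasis.orthonormal.ne_zero i this
  obtain ⟨j₀, hj₀ne⟩ := Function.ne_iff.1 hvne
  obtain ⟨i₀, -, hmax⟩ := Finset.exists_max_image Finset.univ (fun j => |v j|)
    ⟨j₀, Finset.mem_univ j₀⟩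
  have h0 : 0 < |v i₀| :=
    lt_of_lt_of_le (abs_pos.2 hj₀ne) (hmax j₀ (Finset.mem_univ j₀))
  have heq : hK.eigenvalues i * v i₀ = ∑ j, K i₀ j * v j := by
    have := congrFun hv i₀
    simpa [hvdef, Matrix.mulVec, dotProduct, Pi.smul_apply, smul_eq_mul] using this.symm
  have habs : |hK.eigenvalues i| * |v i₀| ≤ B * |v i₀| := by
    rw [← abs_mul, heq]
    calc |∑ j, K i₀ j * v j| ≤ ∑ j, |K i₀ j * v j| := Finset.abs_sum_le_sum_abs _ _
      _ ≤ ∑ j, |K i₀ j| * |v i₀| := by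
          refine Finset.sum_le_sum fun j _ => ?_
          rw [abs_mul]
          exact mul_le_mul_of_nonneg_left (hmax j (Finset.mem_univ j)) (abs_nonneg _)
      _ = (∑ j, |K i₀ j|) * |v i₀| := by rw [← Finset.sum_mul]
      _ ≤ B * |v i₀| := mul_le_mul_of_nonneg_right (hB i₀) (abs_nonneg _)
  have := le_of_mul_le_mul_right habs h0
  exact (le_abs_self _).trans this

lemma annulus_count (d : ℕ) (hd : 1 ≤ d) (δ : ℝ) (hδ : 0 < δ)
    (c : EuclideanSpace ℝ (Fin d)) (m : ℕ) (hm : 1 ≤ m) {ι : Type*} (s : Finset ι)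
    (y : ι → EuclideanSpace ℝ (Fin d))
    (hsep : ∀ i ∈ s, ∀ j ∈ s, i ≠ j → δ ≤ dist (y i) (y j))
    (hmem : ∀ i ∈ s, dist (y i) c ∈ Set.Icc ((m:ℝ)*δ) (((m:ℝ)+1)*δ)) :
    (s.card : ℝ) ≤ 10^d * (m:ℝ)^(d-1) := by
  have hm1 : (1:ℝ) ≤ (m:ℝ) := by exact_mod_cast hm
  have hp := pack_lemma d δ hδ c ((m:ℝ)*δ) (((m:ℝ)+1)*δ)
    (by nlinarith) (by nlinarith) s y hsep hmem
  have hR : ((m:ℝ)+1)*δ + δ/2 = (2*(m:ℝ)+3) * (δ/2) := by ring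
  have hr : (m:ℝ)*δ - δ/2 = (2*(m:ℝ)-1) * (δ/2) := by ring
  rw [hR, hr, mul_pow, mul_pow, ← sub_mul] at hp
  have hpow : (0:ℝ) < (δ/2)^d := by positivity
  have := le_of_mul_le_mul_right hp hpow
  exact this.trans (count_factor d m hd hm)

/-- For a symmetric kernel `k` on `ℝ^d` dominated by a nonincreasing
envelope `ψ` with `∑ m^{d-1} ψ(mδ) < ∞`, every eigenvalue of the kernel matrix of any
`δ`-separated family of points is at most `ψ(0) + 10^d ∑_{m≥1} m^{d-1} ψ(mδ)`,
independently of the number of points `N`. -/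
theorem eigenvalue_upper_bound_of_separated
    (d : ℕ) (hd : 1 ≤ d) (δ : ℝ) (hδ : 0 < δ)
    (ψ : ℝ → ℝ) (hψ_nonneg : ∀ t, 0 ≤ ψ t) (hψ_mono : AntitoneOn ψ (Set.Ici 0))
    (hψ_sum : Summable fun m : ℕ => ((m : ℝ) + 1) ^ (d - 1) * ψ (((m : ℝ) + 1) * δ))
    (k : EuclideanSpace ℝ (Fin d) → EuclideanSpace ℝ (Fin d) → ℝ)
    (hk_symm : ∀ x y, k x y = k y x)
    (hk_decay : ∀ x y, |k x y| ≤ ψ ‖x - y‖)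
    (N : ℕ) (x : Fin N → EuclideanSpace ℝ (Fin d))
    (hsep : ∀ i j, i ≠ j → δ ≤ ‖x i - x j‖)
    (K : Matrix (Fin N) (Fin N) ℝ)
    (hKdef : K = Matrix.of fun i j => k (x i) (x j))
    (hK : K.IsHermitian) :
    ∀ i, hK.eigenvalues i ≤
      ψ 0 + 10 ^ d * ∑' m : ℕ, ((m : ℝ) + 1) ^ (d - 1) * ψ (((m : ℝ) + 1) * δ) := by
  set f : ℕ → ℝ := fun m => ((m : ℝ) + 1) ^ (d - 1) * ψ (((m : ℝ) + 1) * δ) with hf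
  set S := ∑' m : ℕ, f m with hS
  apply eig_le_rowsum K hK
  intro i₀
  -- classify off-diagonal entries by distance annulus
  set cl : Fin N → ℕ := fun j => ⌊‖x i₀ - x j‖ / δ⌋₊ with hcl
  set E : Finset (Fin N) := Finset.univ.erase i₀ with hE
  have hdist : ∀ j ∈ E, δ ≤ ‖x i₀ - x j‖ := fun j hj =>
    hsep i₀ j (fun h => (Finset.mem_erase.1 hj).1 h.symm)
  have hnn : ∀ j, (0:ℝ) ≤ ‖x i₀ - x j‖ / δ := fun j => by positivity
  have hcl1 : ∀ j ∈ E, 1 ≤ cl j := by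
    intro j hj
    exact Nat.le_floor (by rw [Nat.cast_one, le_div_iff₀ hδ, one_mul]; exact hdist j hj)
  have hlow : ∀ j, (cl j : ℝ) * δ ≤ ‖x i₀ - x j‖ := by
    intro j
    have := Nat.floor_le (hnn j)
    calc (cl j : ℝ) * δ ≤ (‖x i₀ - x j‖ / δ) * δ := by
          exact mul_le_mul_of_nonneg_right this hδ.le
      _ = ‖x i₀ - x j‖ := by field_simp
  have hhigh : ∀ j, ‖x i₀ - x j‖ ≤ ((cl j : ℝ) + 1) * δ := by
    intro j
    have := (Nat.lt_floor_add_one (‖x i₀ - x j‖ / δ)).le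
    calc ‖x i₀ - x j‖ = (‖x i₀ - x j‖ / δ) * δ := by field_simp
      _ ≤ ((cl j : ℝ) + 1) * δ := mul_le_mul_of_nonneg_right this hδ.le
  -- diagonal bound
  have hdiag : |K i₀ i₀| ≤ ψ 0 := by
    rw [hKdef]
    simpa using hk_decay (x i₀) (x i₀)
  -- off-diagonal bound
  have hterm : ∀ j ∈ E, |K i₀ j| ≤ ψ ((cl j : ℝ) * δ) := by
    intro j hj
    rw [hKdef]
    refine (hk_decay (x i₀) (x j)).trans ?_
    exact hψ_mono (Set.mem_Ici.2 (by positivity)) (Set.mem_Ici.2 (norm_nonneg _)) (hlow j)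
  set T : Finset ℕ := E.image cl with hT
  have hgroup : ∑ j ∈ E, ψ ((cl j : ℝ) * δ) =
      ∑ n ∈ T, ∑ j ∈ E.filter (fun j => cl j = n), ψ ((cl j : ℝ) * δ) :=
    (Finset.sum_fiberwise_of_maps_to (fun j hj => Finset.mem_image_of_mem cl hj) _).symm
  have hinner : ∀ n ∈ T, ∑ j ∈ E.filter (fun j => cl j = n), ψ ((cl j : ℝ) * δ)
      ≤ 10^d * (n:ℝ)^(d-1) * ψ ((n:ℝ) * δ) := by
    intro n hn
    obtain ⟨j₁, hj₁E, hj₁⟩ := Finset.mem_image.1 hn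
    have hn1 : 1 ≤ n := hj₁ ▸ hcl1 j₁ hj₁E
    have hcount : ((E.filter (fun j => cl j = n)).card : ℝ) ≤ 10^d * (n:ℝ)^(d-1) := by
      refine annulus_count d hd δ hδ (x i₀) n hn1 _ x ?_ ?_
      · intro a ha b hb hab
        rw [dist_eq_norm]
        exact hsep a b hab
      · intro j hj
        obtain ⟨hjE, hjc⟩ := Finset.mem_filter.1 hj
        have h1 := hlow j
        have h2 := hhigh j
        rw [hjc] at h1 h2
        rw [dist_eq_norm, ← norm_sub_rev]
        exact ⟨h1, h2⟩
    calc ∑ j ∈ E.filter (fun j => cl j = n), ψ ((cl j : ℝ) * δ)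
        = ∑ j ∈ E.filter (fun j => cl j = n), ψ ((n : ℝ) * δ) := by
          refine Finset.sum_congr rfl fun j hj => ?_
          rw [(Finset.mem_filter.1 hj).2]
      _ = ((E.filter (fun j => cl j = n)).card : ℝ) * ψ ((n:ℝ) * δ) := by
          rw [Finset.sum_const, nsmul_eq_mul]
      _ ≤ 10^d * (n:ℝ)^(d-1) * ψ ((n:ℝ) * δ) :=
          mul_le_mul_of_nonneg_right hcount (hψ_nonneg _)
  have hT1 : ∀ n ∈ T, 1 ≤ n := by
    intro n hn
    obtain ⟨j₁, hj₁E, hj₁⟩ := Finset.mem_image.1 hn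
    exact hj₁ ▸ hcl1 j₁ hj₁E
  have hsumT : ∑ n ∈ T, (n:ℝ)^(d-1) * ψ ((n:ℝ) * δ) ≤ S := by
    have hinj : Set.InjOn (fun n => n - 1) T := by
      intro a ha b hb hab
      have h1 := hT1 a ha; have h2 := hT1 b hb
      dsimp only at hab
      omega
    have himg : ∑ n ∈ T, (n:ℝ)^(d-1) * ψ ((n:ℝ) * δ) = ∑ m ∈ T.image (fun n => n - 1), f m := by
      rw [Finset.sum_image hinj]
      refine Finset.sum_congr rfl fun n hn => ?_
      have h1 := hT1 n hn
      have : ((n - 1 : ℕ) : ℝ) + 1 = (n : ℝ) := by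
        rw [Nat.cast_sub h1]; ring
      simp only [hf, this]
    rw [himg, hS]
    exact Summable.sum_le_tsum _ (fun m _ => mul_nonneg (by positivity) (hψ_nonneg _)) hψ_sum
  -- assemble
  have hoff : ∑ j ∈ E, |K i₀ j| ≤ 10^d * S :=
    calc ∑ j ∈ E, |K i₀ j| ≤ ∑ j ∈ E, ψ ((cl j : ℝ) * δ) := Finset.sum_le_sum hterm
      _ = ∑ n ∈ T, ∑ j ∈ E.filter (fun j => cl j = n), ψ ((cl j : ℝ) * δ) := hgroup
      _ ≤ ∑ n ∈ T, 10^d * (n:ℝ)^(d-1) * ψ ((n:ℝ) * δ) := Finset.sum_le_sum hinner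
      _ = 10^d * ∑ n ∈ T, (n:ℝ)^(d-1) * ψ ((n:ℝ) * δ) := by
          rw [Finset.mul_sum]; exact Finset.sum_congr rfl fun n _ => by ring
      _ ≤ 10^d * S := mul_le_mul_of_nonneg_left hsumT (by positivity)
  calc ∑ j, |K i₀ j| = ∑ j ∈ E, |K i₀ j| + |K i₀ i₀| :=
        (Finset.sum_erase_add _ _ (Finset.mem_univ i₀)).symm
    _ ≤ 10^d * S + ψ 0 := add_le_add hoff hdiag
    _ = ψ 0 + 10^d * S := by ring
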